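/- For all integers d ≥ s ≥ 2, the set of finite O-sequences of multiplicity d and length s is finite and nonempty, and its maximum h_max with respect to the total order < satisfies g(h_max) = max{ g(h) : h a finite O-sequence of multiplicity d and length s }. -/

import Mathlib

/-- The Macaulay bound `a^⟨t⟩`: if `a = C(k_t,t) + C(k_{t-1},t-1) + ⋯ + C(k_j,j)` is the
binomial expansion of `a` in base `t`, then `a^⟨t⟩ = C(k_t+1,t+1) + ⋯ + C(k_j+1,j+1)`.
Computed greedily; `mac t a = a^⟨t⟩` for `t ≥ 1`. -/
def mac : ℕ → ℕ → ℕ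
  | 0, _ => 0
  | t+1, a =>
    if a = 0 then 0
    else
      Nat.choose (Nat.findGreatest (fun n => Nat.choose n (t+1) ≤ a) (a + t + 1) + 1) (t+2) +
        mac t (a - Nat.choose (Nat.findGreatest (fun n => Nat.choose n (t+1) ≤ a) (a + t + 1)) (t+1))

/-- `h : ℕ → ℕ` is a finite O-sequence of length `s`: `h 0 = 1`, the entries `h 0, …, h (s-1)`
are positive, entries from index `s` on are zero, and `h (t+1) ≤ (h t)^⟨t⟩` for all `t ≥ 1`. -/
def IsOSeq (h : ℕ → ℕ) (s : ℕ) : Prop :=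
  h 0 = 1 ∧ (∀ i, 0 < h i ↔ i < s) ∧ ∀ t, 1 ≤ t → h (t + 1) ≤ mac t (h t)

/-- The multiplicity `e(h) = h_0 + ⋯ + h_{s-1}` of a finite O-sequence of length `s`. -/
def mult (h : ℕ → ℕ) (s : ℕ) : ℕ := ∑ i ∈ Finset.range s, h i

/-- The genus `g(h) = Σ_{j=2}^{s-1} (j-1)·h_j` of a finite O-sequence of length `s`. -/
def genus (h : ℕ → ℕ) (s : ℕ) : ℕ := ∑ j ∈ Finset.range s, (j - 1) * h j

/-- The sequence obtained from `h` by increasing the `i`-th entry by `1`, i.e. `h + e_i`. -/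
def addE (h : ℕ → ℕ) (i : ℕ) : ℕ → ℕ := fun j => if j = i then h j + 1 else h j

/-- The sequence obtained from `h` by decreasing the `i`-th entry by `1`, i.e. `h - e_i`. -/
def subE (h : ℕ → ℕ) (i : ℕ) : ℕ → ℕ := fun j => if j = i then h j - 1 else h j

/-- The total order on finite O-sequences of the same length: `oLT h k` iff `h_ℓ < k_ℓ`
where `ℓ = max{ j : h_j ≠ k_j }`. -/
def oLT (h k : ℕ → ℕ) : Prop := ∃ ℓ, h ℓ < k ℓ ∧ ∀ j, ℓ < j → h j = k j

/-- The set of genera of finite O-sequences of multiplicity `d` and length `s`. -/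
def genusSet (d s : ℕ) : Set ℕ := {g | ∃ h, IsOSeq h s ∧ mult h s = d ∧ genus h s = g}

/-- `G_d`: the set of genera of finite O-sequences of multiplicity `d` (of any length). -/
def GSet (d : ℕ) : Set ℕ := {g | ∃ h s, IsOSeq h s ∧ mult h s = d ∧ genus h s = g}

/-- `g` is a gap in `R_d = [0, C(d-1,2)]`: it lies in the range but is not the genus of any
finite O-sequence of multiplicity `d`. -/
def IsGap (d g : ℕ) : Prop :=
  g ≤ Nat.choose (d - 1) 2 ∧ ∀ h s, IsOSeq h s → mult h s = d → genus h s ≠ g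

/-- The O-sequence `(1, d-s+1, 1^{s-2})`, minimal in `𝒢_d^s`. -/
def minSeq (d s : ℕ) : ℕ → ℕ :=
  fun j => if j = 0 then 1 else if j = 1 then d - s + 1 else if j < s then 1 else 0

/-- The O-sequence `(1, 2^{d-s}, 1^{2s-d-1})`, maximal in `𝒢_d^s`. -/
def maxSeq (d s : ℕ) : ℕ → ℕ :=
  fun j => if j = 0 then 1 else if j ≤ d - s then 2 else if j < s then 1 else 0

/-- The O-sequence `(1, d-1)`. -/
def twoSeq (d : ℕ) : ℕ → ℕ := fun j => if j = 0 then 1 else if j = 1 then d - 1 else 0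

/-- The operation `h ↦ h - e_{s-1} + e_1` on a sequence of length `s`. -/
def downUp (h : ℕ → ℕ) (s : ℕ) : ℕ → ℕ :=
  fun j => if j = s - 1 then h j - 1 else if j = 1 then h j + 1 else h j

/-- The largest index `1 ≤ j ≤ s-1` with `h j > 1` (and `0` if there is none). -/
def topIdx (h : ℕ → ℕ) (s : ℕ) : ℕ := Nat.findGreatest (fun j => 1 < h j) (s - 1)

/-- The operation `h ↦ h - e_i + e_1` where `i = topIdx h s`. -/
def shiftDown (h : ℕ → ℕ) (s : ℕ) : ℕ → ℕ :=
  fun j => if j = topIdx h s then h j - 1 else if j = 1 then h j + 1 else h j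

/-- Auxiliary list `[m_n, m_{n-1}, …, m_1]` for the recursively defined sequence `(m_d)`. -/
def mListAux : ℕ → List ℕ
  | 0 => []
  | n+1 =>
    let prev := mListAux n
    let newVal :=
      if n = 0 then 0
      else
        (List.range' 2 (n - 1)).foldl
          (fun M k =>
            if Nat.choose k 2 - 1 ≤ M then max M (prev.getD (k - 1) 0 + Nat.choose k 2) else M)
          (prev.getD 0 0)
    newVal :: prev

/-- The sequence `(m_d)_{d ≥ 1}`: `m_1 = 0` and, for `d ≥ 2`, `m_d` is obtained from
`M := m_{d-1}` by running over `k = 2, …, d-1` and replacing `M` by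
`max M (m_{d-k} + C(k,2))` whenever `C(k,2) - 1 ≤ M`. -/
def mSeq (d : ℕ) : ℕ := (mListAux d).getD 0 0

lemma mac_zero : ∀ t, mac t 0 = 0 := by
  intro t; cases t <;> simp [mac]

lemma lt_choose_add (t a : ℕ) : a < Nat.choose (a + t + 1) (t + 1) := by
  induction t with
  | zero => simp [Nat.choose_one_right]
  | succ t ih =>
      have : a + (t+1) + 1 = (a + t + 1) + 1 := by ring
      rw [this, Nat.choose_succ_succ']
      omega

lemma mac_g_spec (t a : ℕ) (ha : 0 < a) :
    t + 1 ≤ Nat.findGreatest (fun n => Nat.choose n (t+1) ≤ a) (a + t + 1) ∧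
    Nat.choose (Nat.findGreatest (fun n => Nat.choose n (t+1) ≤ a) (a + t + 1)) (t+1) ≤ a ∧
    a < Nat.choose (Nat.findGreatest (fun n => Nat.choose n (t+1) ≤ a) (a + t + 1) + 1) (t+1) := by
  set g := Nat.findGreatest (fun n => Nat.choose n (t+1) ≤ a) (a + t + 1) with hg
  have hP : Nat.choose (t+1) (t+1) ≤ a := by rw [Nat.choose_self]; exact ha
  have h1 : t + 1 ≤ g := Nat.le_findGreatest (by omega) hP
  have h2 : Nat.choose g (t+1) ≤ a :=
    Nat.findGreatest_spec (P := fun n => Nat.choose n (t+1) ≤ a) (m := t+1) (n := a + t + 1) (by omega) hP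
  have hglt : g < a + t + 1 := by
    rcases Nat.lt_or_ge g (a + t + 1) with h | h
    · exact h
    · have hle : g ≤ a + t + 1 := Nat.findGreatest_le _
      have : g = a + t + 1 := le_antisymm hle h
      rw [this] at h2
      exact absurd h2 (Nat.not_le.2 (lt_choose_add t a))
  have h3 : ¬ (Nat.choose (g+1) (t+1) ≤ a) :=
    Nat.findGreatest_is_greatest (P := fun n => Nat.choose n (t+1) ≤ a) (n := a + t + 1)
      (by omega) (by omega)
  exact ⟨h1, h2, by omega⟩

lemma macU : ∀ t a m, a < Nat.choose m t → mac t a < Nat.choose (m+1) (t+1) := by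
  intro t
  induction t with
  | zero =>
      intro a m h
      simp [Nat.choose_zero_right] at h
      simp [mac, h, Nat.choose_one_right]
  | succ t ih =>
      intro a m h
      have hm : t + 1 ≤ m := by
        by_contra hc
        rw [Nat.choose_eq_zero_of_lt (by omega)] at h; omega
      rcases Nat.eq_zero_or_pos a with rfl | ha
      · rw [mac_zero]
        exact Nat.choose_pos (by omega)
      obtain ⟨h1, h2, h3⟩ := mac_g_spec t a ha
      set g := Nat.findGreatest (fun n => Nat.choose n (t+1) ≤ a) (a + t + 1) with hg
      have hglt : g < m := by
        by_contra hc
        have := Nat.choose_le_choose (t+1) (Nat.not_lt.1 hc)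
        omega
      have hpascal : Nat.choose (g+1) (t+1) = Nat.choose g t + Nat.choose g (t+1) :=
        Nat.choose_succ_succ' g t
      have hr : a - Nat.choose g (t+1) < Nat.choose g t := by omega
      have hrec := ih (a - Nat.choose g (t+1)) g hr
      have hunfold : mac (t+1) a =
          Nat.choose (g + 1) (t+2) + mac t (a - Nat.choose g (t+1)) := by
        rw [mac, if_neg (by omega)]
      rw [hunfold]
      have hp2 : Nat.choose (g+2) (t+2) = Nat.choose (g+1) (t+1) + Nat.choose (g+1) (t+2) :=
        Nat.choose_succ_succ' (g+1) (t+1)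
      have hle : Nat.choose (g+2) (t+2) ≤ Nat.choose (m+1) (t+1+1) :=
        Nat.choose_le_choose _ (by omega)
      omega

lemma mac_mono : ∀ t {a b}, a ≤ b → mac t a ≤ mac t b := by
  intro t
  induction t with
  | zero => intro a b _; simp [mac]
  | succ t ih =>
      intro a b hab
      rcases Nat.eq_zero_or_pos a with rfl | ha
      · rw [mac_zero]; exact Nat.zero_le _
      have hb : 0 < b := lt_of_lt_of_le ha hab
      obtain ⟨ha1, ha2, ha3⟩ := mac_g_spec t a ha
      obtain ⟨hb1, hb2, hb3⟩ := mac_g_spec t b hb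
      set ga := Nat.findGreatest (fun n => Nat.choose n (t+1) ≤ a) (a + t + 1) with hga
      set gb := Nat.findGreatest (fun n => Nat.choose n (t+1) ≤ b) (b + t + 1) with hgb
      have hunfa : mac (t+1) a =
          Nat.choose (ga + 1) (t+2) + mac t (a - Nat.choose ga (t+1)) := by
        rw [mac, if_neg (by omega)]
      have hunfb : mac (t+1) b =
          Nat.choose (gb + 1) (t+2) + mac t (b - Nat.choose gb (t+1)) := by
        rw [mac, if_neg (by omega)]
      have hgab : ga ≤ gb := by
        by_contra hc
        have := Nat.choose_le_choose (t+1) (show gb + 1 ≤ ga by omega)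
        omega
      rcases eq_or_lt_of_le hgab with heq | hlt
      · rw [hunfa, hunfb, heq]
        have := ih (a := a - Nat.choose gb (t+1)) (b := b - Nat.choose gb (t+1)) (by omega)
        omega
      · have h1 : mac (t+1) a < Nat.choose (ga + 2) (t+2) := macU (t+1) a (ga+1) ha3
        have h2 : Nat.choose (ga+2) (t+2) ≤ Nat.choose (gb+1) (t+2) :=
          Nat.choose_le_choose _ (by omega)
        rw [hunfb]; omega

lemma mac_one (t : ℕ) : mac (t+1) 1 = 1 := by
  obtain ⟨h1, h2, _⟩ := mac_g_spec t 1 one_pos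
  set g := Nat.findGreatest (fun n => Nat.choose n (t+1) ≤ 1) (1 + t + 1) with hg
  have hgeq : g = t + 1 := by
    by_contra hc
    have h4 : t + 2 ≤ g := by omega
    have := Nat.choose_le_choose (t+1) h4
    rw [Nat.choose_succ_self_right] at this
    omega
  rw [mac, if_neg one_ne_zero, ← hg, hgeq, Nat.choose_self, Nat.choose_self,
    Nat.sub_self, mac_zero]

lemma mac_pos (t a : ℕ) (ha : 0 < a) : 0 < mac (t+1) a := by
  obtain ⟨h1, _, _⟩ := mac_g_spec t a ha
  rw [mac, if_neg (by omega)]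
  have := Nat.choose_pos (show t + 2 ≤ Nat.findGreatest (fun n => Nat.choose n (t+1) ≤ a) (a+t+1) + 1 by omega)
  omega

/-! ### Auxiliary lemmas -/

-- mac lemmas here (MACPLACEHOLDER)

lemma IsOSeq.zero' {h : ℕ → ℕ} {s : ℕ} (hh : IsOSeq h s) {i : ℕ} (hi : s ≤ i) : h i = 0 := by
  have := (hh.2.1 i).2
  by_contra hc
  exact absurd ((hh.2.1 i).1 (by omega)) (by omega)

lemma IsOSeq.pos' {h : ℕ → ℕ} {s : ℕ} (hh : IsOSeq h s) {i : ℕ} (hi : i < s) : 0 < h i :=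
  (hh.2.1 i).2 hi

lemma entry_le_mult {h : ℕ → ℕ} {s : ℕ} (hh : IsOSeq h s) (i : ℕ) : h i ≤ mult h s := by
  by_cases hi : i < s
  · exact Finset.single_le_sum (f := h) (fun _ _ => Nat.zero_le _) (Finset.mem_range.2 hi)
  · rw [hh.zero' (Nat.not_lt.1 hi)]; exact Nat.zero_le _

lemma sum_split {s ℓ : ℕ} (f : ℕ → ℕ) (hls : ℓ < s) :
    ∑ i ∈ Finset.range s, f i
      = ((∑ i ∈ Finset.range ℓ, f i) + f ℓ) + ∑ i ∈ Finset.Ico (ℓ+1) s, f i := by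
  rw [Finset.range_eq_Ico,
    ← Finset.sum_Ico_consecutive f (Nat.zero_le (ℓ+1)) (by omega : ℓ+1 ≤ s)]
  simp only [← Finset.range_eq_Ico]
  rw [Finset.sum_range_succ]

lemma geom_aux (d : ℕ) : ∀ n, (∑ i ∈ Finset.range n, (d+1)^i * d) + 1 = (d+1)^n := by
  intro n
  induction n with
  | zero => simp
  | succ n ih =>
      rw [Finset.sum_range_succ, pow_succ, Nat.mul_succ]
      omega

lemma oLT_trichotomy {h k : ℕ → ℕ} {s : ℕ} (hh : IsOSeq h s) (hk : IsOSeq k s)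
    (hne : h ≠ k) : oLT h k ∨ oLT k h := by
  have hex : ∃ i, i < s ∧ h i ≠ k i := by
    by_contra hc
    push_neg at hc
    apply hne
    funext i
    by_cases hi : i < s
    · exact hc i hi
    · rw [hh.zero' (Nat.not_lt.1 hi), hk.zero' (Nat.not_lt.1 hi)]
  set T := (Finset.range s).filter (fun i => h i ≠ k i) with hT
  have hTne : T.Nonempty := by
    obtain ⟨i, hi1, hi2⟩ := hex
    exact ⟨i, Finset.mem_filter.2 ⟨Finset.mem_range.2 hi1, hi2⟩⟩
  set ℓ := T.max' hTne with hℓdef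
  have hℓ : h ℓ ≠ k ℓ := (Finset.mem_filter.1 (T.max'_mem hTne)).2
  have habove : ∀ j, ℓ < j → h j = k j := by
    intro x hx
    by_cases hxs : x < s
    · by_contra hne'
      have hxT : x ∈ T := Finset.mem_filter.2 ⟨Finset.mem_range.2 hxs, hne'⟩
      have := T.le_max' x hxT
      omega
    · rw [hh.zero' (Nat.not_lt.1 hxs), hk.zero' (Nat.not_lt.1 hxs)]
  rcases Nat.lt_or_ge (h ℓ) (k ℓ) with hl | hl
  · exact Or.inl ⟨ℓ, hl, habove⟩
  · exact Or.inr ⟨ℓ, by omega, fun x hx => (habove x hx).symm⟩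

lemma measure_lt {h k : ℕ → ℕ} {s d : ℕ} (hh : IsOSeq h s) (hk : IsOSeq k s)
    (eh : mult h s = d) (ek : mult k s = d) (hlt : oLT h k) :
    ∑ i ∈ Finset.range s, (d+1)^i * h i < ∑ i ∈ Finset.range s, (d+1)^i * k i := by
  obtain ⟨ℓ, hℓlt, hab⟩ := hlt
  have hℓs : ℓ < s := by
    by_contra hc
    rw [hh.zero' (Nat.not_lt.1 hc), hk.zero' (Nat.not_lt.1 hc)] at hℓlt
    omega
  rw [sum_split (fun i => (d+1)^i * h i) hℓs, sum_split (fun i => (d+1)^i * k i) hℓs]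
  have htail : ∑ i ∈ Finset.Ico (ℓ+1) s, (d+1)^i * h i
      = ∑ i ∈ Finset.Ico (ℓ+1) s, (d+1)^i * k i := by
    refine Finset.sum_congr rfl (fun x hx => ?_)
    rw [hab x (Finset.mem_Ico.1 hx).1]
  have hhead : ∑ i ∈ Finset.range ℓ, (d+1)^i * h i ≤ ∑ i ∈ Finset.range ℓ, (d+1)^i * d := by
    refine Finset.sum_le_sum (fun x _ => Nat.mul_le_mul_left _ ?_)
    rw [← eh]; exact entry_le_mult hh x
  have hgeo := geom_aux d ℓ
  have hmul : (d+1)^ℓ * (h ℓ + 1) ≤ (d+1)^ℓ * k ℓ := Nat.mul_le_mul_left _ (by omega)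
  rw [Nat.mul_add, Nat.mul_one] at hmul
  have hkpos : 0 ≤ ∑ i ∈ Finset.range ℓ, (d+1)^i * k i := Nat.zero_le _
  omega

lemma exists_up {h k : ℕ → ℕ} {s d : ℕ} (hh : IsOSeq h s) (hk : IsOSeq k s)
    (eh : mult h s = d) (ek : mult k s = d) (hlt : oLT h k) :
    ∃ h', IsOSeq h' s ∧ mult h' s = d ∧ oLT h h' ∧ genus h s ≤ genus h' s := by
  obtain ⟨ℓ, hℓlt, hab⟩ := hlt
  have hℓs : ℓ < s := by
    by_contra hc
    rw [hh.zero' (Nat.not_lt.1 hc), hk.zero' (Nat.not_lt.1 hc)] at hℓlt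
    omega
  have hsum : mult h s = mult k s := by rw [eh, ek]
  have hlow : ∑ i ∈ Finset.range ℓ, k i < ∑ i ∈ Finset.range ℓ, h i := by
    unfold mult at hsum
    rw [sum_split h hℓs, sum_split k hℓs] at hsum
    have htail : ∑ i ∈ Finset.Ico (ℓ+1) s, h i = ∑ i ∈ Finset.Ico (ℓ+1) s, k i :=
      Finset.sum_congr rfl (fun x hx => hab x (Finset.mem_Ico.1 hx).1)
    omega
  have hexj : ∃ x, x ∈ Finset.range ℓ ∧ k x < h x := by
    by_contra hc
    push_neg at hc
    have : ∑ i ∈ Finset.range ℓ, h i ≤ ∑ i ∈ Finset.range ℓ, k i :=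
      Finset.sum_le_sum (fun x hx => hc x hx)
    omega
  set T := (Finset.range ℓ).filter (fun x => k x < h x) with hTdef
  have hTne : T.Nonempty := by
    obtain ⟨x, hx1, hx2⟩ := hexj
    exact ⟨x, Finset.mem_filter.2 ⟨hx1, hx2⟩⟩
  set j := T.max' hTne with hjdef
  have hjmem := Finset.mem_filter.1 (T.max'_mem hTne)
  have hjℓ : j < ℓ := Finset.mem_range.1 hjmem.1
  have hjk : k j < h j := hjmem.2
  have hj1 : 1 ≤ j := by
    rcases Nat.eq_zero_or_pos j with h0 | h1
    · rw [h0] at hjk; rw [hh.1, hk.1] at hjk; omega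
    · exact h1
  have hjmax : ∀ x, j < x → x < ℓ → h x ≤ k x := by
    intro x hx1 hx2
    by_contra hc
    have hxT : x ∈ T := Finset.mem_filter.2 ⟨Finset.mem_range.2 hx2, by omega⟩
    have := T.le_max' x hxT
    omega
  set U := (Finset.Ioc j ℓ).filter (fun x => h x < k x) with hUdef
  have hUne : U.Nonempty :=
    ⟨ℓ, Finset.mem_filter.2 ⟨Finset.mem_Ioc.2 ⟨hjℓ, le_refl ℓ⟩, hℓlt⟩⟩
  set i := U.min' hUne with hidef
  have himem := Finset.mem_filter.1 (U.min'_mem hUne)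
  have hji : j < i := (Finset.mem_Ioc.1 himem.1).1
  have hiℓ : i ≤ ℓ := (Finset.mem_Ioc.1 himem.1).2
  have hik : h i < k i := himem.2
  have his : i < s := by omega
  have hjs : j < s := by omega
  have himin : ∀ x, j < x → x < i → h x = k x := by
    intro x hx1 hx2
    have h1 : h x ≤ k x := hjmax x hx1 (by omega)
    by_contra hc
    have hxU : x ∈ U := Finset.mem_filter.2 ⟨Finset.mem_Ioc.2 ⟨hx1, by omega⟩, by omega⟩
    have := U.min'_le x hxU
    omega
  have hkjpos : 0 < k j := hk.pos' hjs
  have hj2 : 2 ≤ h j := by omega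
  set h' : ℕ → ℕ := fun x => if x = j then h x - 1 else if x = i then h x + 1 else h x
    with hh'def
  have hij : i ≠ j := by omega
  have e_j : h' j = h j - 1 := by simp [hh'def]
  have e_i : h' i = h i + 1 := by simp [hh'def, hij]
  have e_other : ∀ x, x ≠ j → x ≠ i → h' x = h x := by
    intro x h1 h2; simp [hh'def, h1, h2]
  -- h' is an O-sequence
  have hO : IsOSeq h' s := by
    refine ⟨?_, ?_, ?_⟩
    · rw [e_other 0 (by omega) (by omega)]; exact hh.1
    · intro x
      by_cases hxj : x = j
      · subst hxj; rw [e_j]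
        constructor
        · intro _; omega
        · intro _; omega
      · by_cases hxi : x = i
        · subst hxi; rw [e_i]
          constructor
          · intro _; omega
          · intro _; omega
        · rw [e_other x hxj hxi]; exact hh.2.1 x
    · intro t ht
      by_cases htj : t = j
      · rw [htj, e_j]
        by_cases hji1 : j + 1 = i
        · rw [hji1, e_i]
          have h2 := hk.2.2 j (by omega)
          rw [hji1] at h2
          have h3 : mac j (k j) ≤ mac j (h j - 1) := mac_mono j (by omega)
          omega
        · rw [e_other (j+1) (by omega) hji1]
          have h1 : h (j+1) = k (j+1) := himin (j+1) (by omega) (by omega)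
          have h2 := hk.2.2 j (by omega)
          have h3 : mac j (k j) ≤ mac j (h j - 1) := mac_mono j (by omega)
          omega
      · by_cases hti : t = i
        · rw [hti, e_i, e_other (i+1) (by omega) (by omega)]
          exact le_trans (hh.2.2 i (by omega)) (mac_mono i (by omega))
        · rw [e_other t htj hti]
          by_cases ht1j : t + 1 = j
          · rw [ht1j, e_j]
            have h1 := hh.2.2 t ht
            rw [ht1j] at h1
            omega
          · by_cases ht1i : t + 1 = i
            · rw [ht1i, e_i]
              have hteq : h t = k t := himin t (by omega) (by omega)
              have h2 := hk.2.2 t ht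
              rw [ht1i] at h2
              rw [hteq]
              omega
            · rw [e_other (t+1) ht1j ht1i]
              exact hh.2.2 t ht
  -- multiplicity
  have hj_in : j ∈ Finset.range s := Finset.mem_range.2 hjs
  have hi_in : i ∈ Finset.range s := Finset.mem_range.2 his
  have hmult : mult h' s = d := by
    have hpt : ∀ x, h' x + (if x = j then 1 else 0) = h x + (if x = i then 1 else 0) := by
      intro x
      by_cases hxj : x = j
      · rw [hxj, e_j, if_pos rfl, if_neg (Ne.symm hij)]
        omega
      · by_cases hxi : x = i
        · rw [hxi, e_i, if_neg hij, if_pos rfl]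
        · rw [e_other x hxj hxi, if_neg hxj, if_neg hxi]
    have hsum2 : ∑ x ∈ Finset.range s, (h' x + (if x = j then 1 else 0))
        = ∑ x ∈ Finset.range s, (h x + (if x = i then 1 else 0)) :=
      Finset.sum_congr rfl (fun x _ => hpt x)
    rw [Finset.sum_add_distrib, Finset.sum_add_distrib,
      Finset.sum_ite_eq' (Finset.range s) j (fun _ => 1),
      Finset.sum_ite_eq' (Finset.range s) i (fun _ => 1),
      if_pos hj_in, if_pos hi_in] at hsum2
    have : mult h' s + 1 = mult h s + 1 := hsum2
    omega
  -- genus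
  have hgen : genus h s ≤ genus h' s := by
    have hpt : ∀ x, (x-1) * h' x + (if x = j then x - 1 else 0)
        = (x-1) * h x + (if x = i then x - 1 else 0) := by
      intro x
      by_cases hxj : x = j
      · rw [hxj, e_j, if_pos rfl, if_neg (Ne.symm hij)]
        obtain ⟨c, hc⟩ : ∃ c, h j = c + 1 := ⟨h j - 1, by omega⟩
        rw [hc, Nat.add_sub_cancel, Nat.mul_succ]
        omega
      · by_cases hxi : x = i
        · rw [hxi, e_i, if_neg hij, if_pos rfl, Nat.mul_succ]
          omega
        · rw [e_other x hxj hxi, if_neg hxj, if_neg hxi]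
    have hsum2 : ∑ x ∈ Finset.range s, ((x-1) * h' x + (if x = j then x - 1 else 0))
        = ∑ x ∈ Finset.range s, ((x-1) * h x + (if x = i then x - 1 else 0)) :=
      Finset.sum_congr rfl (fun x _ => hpt x)
    rw [Finset.sum_add_distrib, Finset.sum_add_distrib,
      Finset.sum_ite_eq' (Finset.range s) j (fun x => x - 1),
      Finset.sum_ite_eq' (Finset.range s) i (fun x => x - 1),
      if_pos hj_in, if_pos hi_in] at hsum2
    have hgg : genus h' s + (j - 1) = genus h s + (i - 1) := hsum2
    have : j - 1 ≤ i - 1 := by omega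
    omega
  refine ⟨h', hO, hmult, ⟨i, ?_, ?_⟩, hgen⟩
  · rw [e_i]; omega
  · intro x hx
    exact (e_other x (by omega) (by omega)).symm

lemma minSeq_isOSeq {d s : ℕ} (hs : 2 ≤ s) (hsd : s ≤ d) : IsOSeq (minSeq d s) s := by
  refine ⟨by simp [minSeq], ?_, ?_⟩
  · intro i
    rcases Nat.eq_zero_or_pos i with rfl | hi
    · simp [minSeq]; omega
    · rcases Nat.lt_or_ge i s with h1 | h1
      · rcases Nat.eq_or_lt_of_le hi with h2 | h2
        · simp [minSeq, ← h2]; omega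
        · have : ¬ (i = 0) := by omega
          have h3 : ¬ (i = 1) := by omega
          simp [minSeq, this, h3, h1]
      · have h0 : ¬ (i = 0) := by omega
        have h3 : ¬ (i = 1) := by omega
        have h4 : ¬ (i < s) := by omega
        simp [minSeq, h0, h3, h4]
  · intro t ht
    have ht0 : ¬ (t + 1 = 0) := by omega
    have ht1 : ¬ (t + 1 = 1) := by omega
    by_cases hts : t + 1 < s
    · have helt : minSeq d s (t+1) = 1 := by simp [minSeq, ht0, ht1, hts, show t ≠ 0 by omega]
      rw [helt]
      rcases Nat.eq_or_lt_of_le ht with h1 | h1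
      · have : minSeq d s t = d - s + 1 := by simp [minSeq, ← h1]
        rw [this]
        obtain ⟨t', ht'⟩ : ∃ t', t = t' + 1 := ⟨t - 1, by omega⟩
        rw [ht']
        exact mac_pos t' (d - s + 1) (by omega)
      · have h2 : ¬ (t = 0) := by omega
        have h3 : ¬ (t = 1) := by omega
        have h4 : t < s := by omega
        have : minSeq d s t = 1 := by simp [minSeq, h2, h3, h4]
        rw [this]
        obtain ⟨t', ht'⟩ : ∃ t', t = t' + 1 := ⟨t - 1, by omega⟩
        rw [ht', mac_one]
    · have : minSeq d s (t+1) = 0 := by simp [minSeq, ht0, ht1, hts, show t ≠ 0 by omega]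
      rw [this]
      exact Nat.zero_le _

lemma minSeq_mult {d s : ℕ} (hs : 2 ≤ s) (hsd : s ≤ d) : mult (minSeq d s) s = d := by
  unfold mult
  rw [Finset.range_eq_Ico,
    ← Finset.sum_Ico_consecutive (minSeq d s) (Nat.zero_le 2) hs]
  have h1 : ∑ i ∈ Finset.Ico 2 s, minSeq d s i = s - 2 := by
    rw [Finset.sum_congr rfl (g := fun _ => 1) (fun x hx => ?_), Finset.sum_const,
      Nat.card_Ico, smul_eq_mul, mul_one]
    have hx1 := Finset.mem_Ico.1 hx
    have hx2 : ¬ (x = 0) := by omega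
    have hx3 : ¬ (x = 1) := by omega
    simp [minSeq, hx2, hx3, hx1.2]
  have h2 : ∑ i ∈ Finset.Ico 0 2, minSeq d s i = 1 + (d - s + 1) := by
    rw [show Finset.Ico 0 2 = {0, 1} from rfl]
    rw [Finset.sum_insert (by decide), Finset.sum_singleton]
    simp [minSeq]
  rw [h1, h2]
  omega
/-- For all `d ≥ s ≥ 2`, the set of finite O-sequences of multiplicity `d`
and length `s` is finite and nonempty, and its maximum `h_max` with respect to the total
order satisfies `g(h_max) = max{g(h)}` over this set. -/
theorem stmt7 (d s : ℕ) (hs : 2 ≤ s) (hsd : s ≤ d) :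
    {h : ℕ → ℕ | IsOSeq h s ∧ mult h s = d}.Finite ∧
    {h : ℕ → ℕ | IsOSeq h s ∧ mult h s = d}.Nonempty ∧
    ∃ hmax : ℕ → ℕ, IsOSeq hmax s ∧ mult hmax s = d ∧
      (∀ h : ℕ → ℕ, IsOSeq h s → mult h s = d → h ≠ hmax → oLT h hmax) ∧
      (∀ h : ℕ → ℕ, IsOSeq h s → mult h s = d → genus h s ≤ genus hmax s) := by
  set S := {h : ℕ → ℕ | IsOSeq h s ∧ mult h s = d} with hSdef
  have hmem : ∀ h, h ∈ S ↔ IsOSeq h s ∧ mult h s = d := fun h => Iff.rfl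
  have hfin : S.Finite := by
    apply Set.Finite.subset (Set.finite_range
      (fun (f : Fin s → Fin (d+1)) (x : ℕ) => if hx : x < s then (f ⟨x, hx⟩ : ℕ) else 0))
    rintro h ⟨hO, hm⟩
    refine ⟨fun x => ⟨h x, ?_⟩, ?_⟩
    · have := entry_le_mult hO x
      omega
    · funext x
      by_cases hx : x < s
      · simp [hx]
      · simp [hx, hO.zero' (Nat.not_lt.1 hx)]
  have hne : S.Nonempty := ⟨minSeq d s, minSeq_isOSeq hs hsd, minSeq_mult hs hsd⟩
  obtain ⟨hmax, hmaxS, hmaxmax⟩ := Set.Finite.exists_maximalFor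
    (fun h => ∑ x ∈ Finset.range s, (d+1)^x * h x) S hfin hne
  have hP1 : ∀ h, IsOSeq h s → mult h s = d → h ≠ hmax → oLT h hmax := by
    intro h hO hm hne'
    rcases oLT_trichotomy hO hmaxS.1 hne' with hlt | hgt
    · exact hlt
    · exfalso
      have h1 := measure_lt hmaxS.1 hO hmaxS.2 hm hgt
      have h2 : ∑ x ∈ Finset.range s, (d+1)^x * h x ≤ ∑ x ∈ Finset.range s, (d+1)^x * hmax x :=
        hmaxmax (j := h) ⟨hO, hm⟩ (le_of_lt h1)
      omega
  refine ⟨hfin, hne, hmax, hmaxS.1, hmaxS.2, hP1, ?_⟩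
  have key : ∀ n (h : ℕ → ℕ), IsOSeq h s → mult h s = d →
      (∑ x ∈ Finset.range s, (d+1)^x * hmax x) ≤ (∑ x ∈ Finset.range s, (d+1)^x * h x) + n →
      genus h s ≤ genus hmax s := by
    intro n
    induction n with
    | zero =>
        intro h hO hm hb
        by_cases heq : h = hmax
        · rw [heq]
        · exfalso
          have := measure_lt hO hmaxS.1 hm hmaxS.2 (hP1 h hO hm heq)
          omega
    | succ n ih =>
        intro h hO hm hb
        by_cases heq : h = hmax
        · rw [heq]
        · obtain ⟨h', hO', hm', holt', hg⟩ :=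
            exists_up hO hmaxS.1 hm hmaxS.2 (hP1 h hO hm heq)
          have hlt1 := measure_lt hO hO' hm hm' holt'
          exact le_trans hg (ih h' hO' hm' (by omega))
  intro h hO hm
  exact key (∑ x ∈ Finset.range s, (d+1)^x * hmax x) h hO hm (by omega)
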